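/- arXiv:2512.02105 — 2 statements merged into one kernel-verified Lean document; each statement's English description precedes it below -/
import Mathlib

section
/- Let A be a unital ring in which 2 is invertible, and let Z, Z', K, K' ∈ A satisfy: Z² = Z'² = K² = K'² = 1; Z and Z' commute with each other and with K and K'; and K K' = −K' K. Set U = (1+Z)/2 + K(1−Z)/2 and V = (1+Z')/2 + K'(1−Z')/2. Then (UV)² = 1 − (1−Z)(1−Z')/2. -/
private lemma cp_aux {A : Type*} [Ring A]
    (Z Z' K K' : A)
    (hZ : Z ^ 2 = 1) (hZ' : Z' ^ 2 = 1) (hK : K ^ 2 = 1) (hK' : K' ^ 2 = 1)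
    (hZZ' : Z * Z' = Z' * Z)
    (hZK : Z * K = K * Z) (hZK' : Z * K' = K' * Z)
    (hZ'K : Z' * K = K * Z') (hZ'K' : Z' * K' = K' * Z')
    (hKK' : K * K' = -(K' * K)) :
    (((1+Z)+K*(1-Z)) * ((1+Z')+K'*(1-Z')))^2 = 8•(1:A) + 8*Z + 8*Z' - 8*(Z*Z') := by
  have pZZ : ∀ x : A, Z*(Z*x) = x := fun x => by rw [← mul_assoc, ← sq, hZ, one_mul]
  have pZ'Z' : ∀ x : A, Z'*(Z'*x) = x := fun x => by rw [← mul_assoc, ← sq, hZ', one_mul]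
  have pKK : ∀ x : A, K*(K*x) = x := fun x => by rw [← mul_assoc, ← sq, hK, one_mul]
  have pK'K' : ∀ x : A, K'*(K'*x) = x := fun x => by rw [← mul_assoc, ← sq, hK', one_mul]
  have pZ'Z : ∀ x : A, Z'*(Z*x) = Z*(Z'*x) := fun x => by rw [← mul_assoc, ← hZZ', mul_assoc]
  have pKZ : ∀ x : A, K*(Z*x) = Z*(K*x) := fun x => by rw [← mul_assoc, ← hZK, mul_assoc]
  have pK'Z : ∀ x : A, K'*(Z*x) = Z*(K'*x) := fun x => by rw [← mul_assoc, ← hZK', mul_assoc]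
  have pKZ' : ∀ x : A, K*(Z'*x) = Z'*(K*x) := fun x => by rw [← mul_assoc, ← hZ'K, mul_assoc]
  have pK'Z' : ∀ x : A, K'*(Z'*x) = Z'*(K'*x) := fun x => by rw [← mul_assoc, ← hZ'K', mul_assoc]
  have bK'K : K'*K = -(K*K') := by rw [hKK', neg_neg]
  have pK'K : ∀ x : A, K'*(K*x) = -(K*(K'*x)) := fun x => by
    rw [← mul_assoc, bK'K, neg_mul, mul_assoc]
  have bZZ : Z*Z = 1 := by rw [← sq, hZ]
  have bZ'Z' : Z'*Z' = 1 := by rw [← sq, hZ']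
  have bKK : K*K = 1 := by rw [← sq, hK]
  have bK'K' : K'*K' = 1 := by rw [← sq, hK']
  have bZ'Z : Z'*Z = Z*Z' := hZZ'.symm
  have bKZ : K*Z = Z*K := hZK.symm
  have bK'Z : K'*Z = Z*K' := hZK'.symm
  have bKZ' : K*Z' = Z'*K := hZ'K.symm
  have bK'Z' : K'*Z' = Z'*K' := hZ'K'.symm
  simp only [mul_add, add_mul, mul_sub, sub_mul, mul_one, one_mul, sq, mul_assoc,
    pZZ, pZ'Z', pKK, pK'K', pZ'Z, pKZ, pK'Z, pKZ', pK'Z', pK'K,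
    bZZ, bZ'Z', bKK, bK'K', bZ'Z, bKZ, bK'Z, bKZ', bK'Z', bK'K,
    mul_neg, neg_mul, neg_neg]
  noncomm_ring

/-- Two controlled-parity gates with anticommuting controlled involutions compose
(squared) to the controlled-Z gate: `(UV)² = 1 − (1−Z)(1−Z')/2`. -/
theorem controlled_parity_gates_square
    {A : Type*} [Ring A] [Invertible (2 : A)]
    (Z Z' K K' : A)
    (hZ : Z ^ 2 = 1) (hZ' : Z' ^ 2 = 1) (hK : K ^ 2 = 1) (hK' : K' ^ 2 = 1)
    (hZZ' : Z * Z' = Z' * Z)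
    (hZK : Z * K = K * Z) (hZK' : Z * K' = K' * Z)
    (hZ'K : Z' * K = K * Z') (hZ'K' : Z' * K' = K' * Z')
    (hKK' : K * K' = -(K' * K))
    (U V : A)
    (hU : U = (1 + Z) * ⅟(2 : A) + K * ((1 - Z) * ⅟(2 : A)))
    (hV : V = (1 + Z') * ⅟(2 : A) + K' * ((1 - Z') * ⅟(2 : A))) :
    (U * V) ^ 2 = 1 - (1 - Z) * (1 - Z') * ⅟(2 : A) := by
  have h2 : ∀ x : A, Commute (2 : A) x := fun x => (two_mul x).trans (mul_two x).symm
  have hh : ∀ x : A, Commute (⅟(2 : A)) x := fun x => (h2 x).invOf_left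
  set X : A := (1 + Z) + K * (1 - Z) with hX
  set Y : A := (1 + Z') + K' * (1 - Z') with hY
  have key : (X * Y) ^ 2 = 8•(1:A) + 8*Z + 8*Z' - 8*(Z*Z') :=
    cp_aux Z Z' K K' hZ hZ' hK hK' hZZ' hZK hZK' hZ'K hZ'K' hKK'
  have hUX : U = X * ⅟(2 : A) := by rw [hU, hX]; noncomm_ring
  have hVY : V = Y * ⅟(2 : A) := by rw [hV, hY]; noncomm_ring
  set s : A := ⅟(2 : A) * ⅟(2 : A) with hs
  have hsx : ∀ x : A, Commute s x := fun x => (hh x).mul_left (hh x)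
  have hssx : ∀ x : A, Commute (s * s) x := fun x => (hsx x).mul_left (hsx x)
  have h2s : (2 : A) * s = ⅟(2 : A) := mul_invOf_cancel_left 2 _
  have h8ss : (8 : A) * (s * s) = ⅟(2 : A) := by
    have e8 : (8 : A) = 2 * (2 * 2) := by norm_num
    rw [e8, mul_assoc, mul_assoc, ← mul_assoc (2:A) s s, h2s,
      mul_invOf_cancel_left, h2s]
  have hUV : U * V = X * Y * s := by
    rw [hUX, hVY, hs, mul_assoc, ← mul_assoc (⅟(2:A)) Y, (hh Y).eq,
      mul_assoc Y, ← mul_assoc X, ← mul_assoc]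
  have hsq : (U * V) ^ 2 = (X * Y) ^ 2 * (s * s) := by
    rw [sq, hUV, sq, mul_assoc (X*Y) s, ← mul_assoc s (X*Y) s, (hsx (X*Y)).eq,
      mul_assoc (X*Y) s s, ← mul_assoc, ← mul_assoc]
  have t0 : (8•(1:A)) * (s * s) = ⅟(2 : A) := by
    rw [smul_mul_assoc, one_mul, nsmul_eq_mul, Nat.cast_ofNat, h8ss]
  have t1 : (8 * Z) * (s * s) = Z * ⅟(2 : A) := by
    rw [mul_assoc, ← (hssx Z).eq, ← mul_assoc, h8ss, (hh Z).eq]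
  have t2 : (8 * Z') * (s * s) = Z' * ⅟(2 : A) := by
    rw [mul_assoc, ← (hssx Z').eq, ← mul_assoc, h8ss, (hh Z').eq]
  have t3 : (8 * (Z * Z')) * (s * s) = Z * Z' * ⅟(2 : A) := by
    rw [mul_assoc, ← (hssx (Z * Z')).eq, ← mul_assoc, h8ss, (hh (Z * Z')).eq]
  have main : (U * V) ^ 2 =
      ⅟(2:A) + Z * ⅟(2:A) + Z' * ⅟(2:A) - Z * Z' * ⅟(2:A) := by
    rw [hsq, key, sub_mul, add_mul, add_mul, t0, t1, t2, t3]
  have htwo : ⅟(2 : A) + ⅟(2 : A) = 1 := by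
    rw [← two_mul, mul_invOf_self]
  have expand : (1 - Z) * (1 - Z') * ⅟(2 : A) =
      ⅟(2:A) - Z * ⅟(2:A) - Z' * ⅟(2:A) + Z * Z' * ⅟(2:A) := by noncomm_ring
  rw [main, expand, ← htwo]
  noncomm_ring
end

section
/- Let A be a unital ℂ-algebra containing elements γ_A, γ_B, Z_A, Z_B with γ_A² = γ_B² = Z_A² = Z_B² = 1, and such that γ_B commutes with Z_B. Define z_X = (1 + i Z_X)/√2 for X ∈ {A, B} (so z_X² = i Z_X). Then (γ_A z_A γ_B z_B) · (Z_B z_B γ_B Z_A z_A γ_A) = −1. -/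
/-- The Else–Nayak phase computation for two stacked copies:
`(γ_A z_A γ_B z_B) · (Z_B z_B γ_B Z_A z_A γ_A) = −1`, where
`z_X = (1 + i Z_X)/√2`. -/
theorem else_nayak_phase_minus_one
    {A : Type*} [Ring A] [Algebra ℂ A]
    (γA γB ZA ZB : A)
    (hγA : γA ^ 2 = 1) (hγB : γB ^ 2 = 1) (hZA : ZA ^ 2 = 1) (hZB : ZB ^ 2 = 1)
    (hγBZB : γB * ZB = ZB * γB)
    (zA zB : A)
    (hzA : zA = ((Real.sqrt 2 : ℂ))⁻¹ • (1 + Complex.I • ZA))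
    (hzB : zB = ((Real.sqrt 2 : ℂ))⁻¹ • (1 + Complex.I • ZB)) :
    (γA * zA * γB * zB) * (ZB * zB * γB * ZA * zA * γA) = -1 := by
  have hs : ((Real.sqrt 2 : ℂ))⁻¹ * ((Real.sqrt 2 : ℂ))⁻¹ = (2 : ℂ)⁻¹ := by
    rw [← mul_inv, ← Complex.ofReal_mul, Real.mul_self_sqrt (by norm_num)]
    norm_num
  have key : ∀ Z : A, Z ^ 2 = 1 →
      (((Real.sqrt 2 : ℂ))⁻¹ • (1 + Complex.I • Z)) * Z *
        (((Real.sqrt 2 : ℂ))⁻¹ • (1 + Complex.I • Z)) = Complex.I • (1 : A) := by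
    intro Z hZ
    have hZZ : Z * Z = 1 := by rw [← sq]; exact hZ
    have inner : (1 + Complex.I • Z) * Z * (1 + Complex.I • Z)
        = (2 * Complex.I) • (1 : A) := by
      simp only [add_mul, mul_add, one_mul, mul_one, smul_mul_assoc,
        mul_smul_comm, smul_smul, Complex.I_mul_I, hZZ, two_smul, neg_smul,
        one_smul, smul_add]
      module
    rw [smul_mul_assoc, smul_mul_assoc, mul_smul_comm, smul_smul, hs, inner,
      smul_smul, show ((2:ℂ)⁻¹ * (2 * Complex.I)) = Complex.I by ring]
  have hA := key ZA hZA
  have hB := key ZB hZB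
  subst hzA hzB
  have hγB2 : γB * γB = 1 := by rw [← sq]; exact hγB
  have hγA2 : γA * γA = 1 := by rw [← sq]; exact hγA
  set w : A := ((Real.sqrt 2 : ℂ))⁻¹ • (1 + Complex.I • ZA) with hw
  set v : A := ((Real.sqrt 2 : ℂ))⁻¹ • (1 + Complex.I • ZB) with hv
  calc (γA * w * γB * v) * (ZB * v * γB * ZA * w * γA)
      = γA * w * γB * (v * ZB * v) * γB * ZA * w * γA := by noncomm_ring
    _ = Complex.I • (γA * (w * ZA * w) * γA) := by
        rw [hB]
        simp only [smul_mul_assoc, mul_smul_comm, mul_one]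
        rw [mul_assoc (γA * w) γB γB, hγB2, mul_one]
        congr 1
        noncomm_ring
    _ = -1 := by
        rw [hA, show γA * (Complex.I • (1:A)) * γA = Complex.I • (1:A) from by
            rw [mul_smul_comm, mul_one, smul_mul_assoc, hγA2],
          smul_smul, Complex.I_mul_I, neg_smul, one_smul]
end
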